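/- For 0 < q < 1, the bilateral Jackson integral ∫ E_{q²}(i(1−q²)q²ζ) e_{q²}(−i(1−q²)ζ) d_{q²}ζ, defined as (1−q²)Σ_{m∈ℤ} q^{2m}[f(q^{2m}) + f(−q^{2m})] with f(ζ) = E_{q²}(i(1−q²)q²ζ) e_{q²}(−i(1−q²)ζ), equals (2/(1−q²))·Θ₀, where Θ₀ = (1−q²) Σ_{m∈ℤ} 1/((1−q²)q^{2m} + (1−q²)^{−1}q^{−2m}). -/

import Mathlib

open Complex

/-- `E_{q²}(z) = (−z;q²)_∞` -/
noncomputable def qE (q : ℝ) (z : ℂ) : ℂ := ∏' j : ℕ, (1 + z * (q : ℂ) ^ (2 * j))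

/-- `e_{q²}(z) = 1/(z;q²)_∞` -/
noncomputable def qe (q : ℝ) (z : ℂ) : ℂ := (∏' j : ℕ, (1 - z * (q : ℂ) ^ (2 * j)))⁻¹

open Filter

lemma one_add_I_mul_ne_zero (c : ℝ) (hc : c ≠ 0) : (1 : ℂ) + I * c ≠ 0 := by
  intro h
  apply hc
  have := congrArg Complex.im h
  simpa using this

lemma log_summable (q r : ℝ) (hq0 : 0 < q) (hq1 : q < 1) :
    Summable (fun j : ℕ => Complex.log (1 + I * (r : ℂ) * (q : ℂ) ^ (2 * j))) := by
  have hq2 : (0:ℝ) ≤ q ^ 2 := by positivity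
  have hq2' : q ^ 2 < 1 := by nlinarith
  have hnorm : ∀ j : ℕ, ‖I * (r : ℂ) * (q : ℂ) ^ (2 * j)‖ = |r| * (q ^ 2) ^ j := by
    intro j
    rw [norm_mul, norm_mul, Complex.norm_I, one_mul, Complex.norm_real, norm_pow,
      Complex.norm_real, Real.norm_eq_abs, Real.norm_eq_abs, abs_of_pos hq0, pow_mul]
  have htend : Tendsto (fun j : ℕ => |r| * (q ^ 2) ^ j) atTop (nhds 0) := by
    simpa using (tendsto_pow_atTop_nhds_zero_of_lt_one hq2 hq2').const_mul |r|
  have hev : ∀ᶠ j : ℕ in atTop, ‖I * (r : ℂ) * (q : ℂ) ^ (2 * j)‖ ≤ 1 / 2 := by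
    filter_upwards [htend.eventually_le_const (by norm_num : (0:ℝ) < 1/2)] with j hj
    rw [hnorm j]; exact hj
  apply Summable.of_norm_bounded_eventually (g := fun j => 3 / 2 * (|r| * (q ^ 2) ^ j))
    (((summable_geometric_of_lt_one hq2 hq2').mul_left |r|).mul_left (3/2))
  rw [Nat.cofinite_eq_atTop]
  filter_upwards [hev] with j hj
  calc ‖Complex.log (1 + I * (r : ℂ) * (q : ℂ) ^ (2 * j))‖
      ≤ 3 / 2 * ‖I * (r : ℂ) * (q : ℂ) ^ (2 * j)‖ := Complex.norm_log_one_add_half_le_self hj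
    _ = 3 / 2 * (|r| * (q ^ 2) ^ j) := by rw [hnorm j]

lemma factor_ne_zero (q r : ℝ) (hq0 : 0 < q) (hr : r ≠ 0) (j : ℕ) :
    (1 : ℂ) + I * (r : ℂ) * (q : ℂ) ^ (2 * j) ≠ 0 := by
  have : (1 : ℂ) + I * (r : ℂ) * (q : ℂ) ^ (2 * j) = 1 + I * ((r * q ^ (2 * j) : ℝ) : ℂ) := by
    push_cast; ring
  rw [this]
  exact one_add_I_mul_ne_zero _ (by positivity)

lemma prod_multipliable (q r : ℝ) (hq0 : 0 < q) (hq1 : q < 1) (hr : r ≠ 0) :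
    Multipliable (fun j : ℕ => (1 : ℂ) + I * (r : ℂ) * (q : ℂ) ^ (2 * j)) :=
  Complex.multipliable_of_summable_log (log_summable q r hq0 hq1)

lemma prod_ne_zero (q r : ℝ) (hq0 : 0 < q) (hq1 : q < 1) (hr : r ≠ 0) :
    (∏' j : ℕ, ((1 : ℂ) + I * (r : ℂ) * (q : ℂ) ^ (2 * j))) ≠ 0 := by
  have h2 := Complex.cexp_tsum_eq_tprod
    (f := fun j => (1 : ℂ) + I * (r : ℂ) * (q : ℂ) ^ (2 * j))
    (fun j => factor_ne_zero q r hq0 hr j)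
    (log_summable q r hq0 hq1)
  rw [← h2]
  exact Complex.exp_ne_zero _

set_option maxHeartbeats 400000 in
lemma key_telescope (q r : ℝ) (hq0 : 0 < q) (hq1 : q < 1) (hr : r ≠ 0) :
    qE q (I * (r : ℂ) * (q : ℂ) ^ 2) * qe q (-(I * (r : ℂ))) = (1 + I * (r : ℂ))⁻¹ := by
  set F : ℕ → ℂ := fun j => 1 + I * (r : ℂ) * (q : ℂ) ^ (2 * j) with hF
  have hE : qE q (I * (r : ℂ) * (q : ℂ) ^ 2) = ∏' j : ℕ, F (j + 1) := by
    unfold qE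
    refine tprod_congr fun j => ?_
    simp only [hF]
    rw [show 2 * (j + 1) = 2 * j + 2 by ring, pow_add]
    ring
  have he : qe q (-(I * (r : ℂ))) = (∏' j : ℕ, F j)⁻¹ := by
    unfold qe
    congr 1
    exact tprod_congr fun j => by simp only [hF]; ring
  have hfun : (fun j : ℕ => F (j + 1)) =
      fun j : ℕ => 1 + I * ((r * q ^ 2 : ℝ) : ℂ) * (q : ℂ) ^ (2 * j) := by
    funext j
    simp only [hF]
    push_cast
    rw [show 2 * (j + 1) = 2 * j + 2 by ring, pow_add]
    ring
  have hrq : r * q ^ 2 ≠ 0 := by positivity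
  have hM1 : Multipliable (fun j : ℕ => F (j + 1)) := by
    rw [hfun]; exact prod_multipliable q (r * q ^ 2) hq0 hq1 hrq
  have hsplit : (∏' j : ℕ, F j) = F 0 * ∏' j : ℕ, F (j + 1) := tprod_eq_zero_mul' hM1
  have hT : (∏' j : ℕ, F (j + 1)) ≠ 0 := by
    rw [tprod_congr (fun j => congrFun hfun j)]
    exact prod_ne_zero q (r * q ^ 2) hq0 hq1 hrq
  have hF0 : F 0 = 1 + I * (r : ℂ) := by simp [hF]
  have hF0' : F 0 ≠ 0 := factor_ne_zero q r hq0 hr 0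
  rw [hE, he, hsplit, hF0, mul_inv, mul_comm ((1 + I * (r : ℂ))⁻¹), ← mul_assoc,
    mul_inv_cancel₀ hT, one_mul]

lemma pair_inv (r : ℝ) (hr : r ≠ 0) :
    ((1:ℂ) + I * (r : ℂ))⁻¹ + ((1:ℂ) + I * ((-r : ℝ) : ℂ))⁻¹ = (((2 / (1 + r ^ 2)) : ℝ) : ℂ) := by
  have h1 := one_add_I_mul_ne_zero r hr
  have h2 : (1:ℂ) - I * (r : ℂ) ≠ 0 := by
    have := one_add_I_mul_ne_zero (-r) (neg_ne_zero.2 hr)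
    push_cast at this
    simpa [sub_eq_add_neg, mul_neg] using this
  have hd : ((1 + r ^ 2 : ℝ) : ℂ) ≠ 0 := by
    exact_mod_cast (by positivity : (1 + r ^ 2 : ℝ) ≠ 0)
  push_cast at hd ⊢
  rw [show (1:ℂ) + I * (-(r:ℂ)) = 1 - I * r by ring]
  field_simp
  ring_nf
  rw [Complex.I_sq]
  ring

theorem jackson_integral_Ee_theta (q : ℝ) (hq0 : 0 < q) (hq1 : q < 1) :
    (1 - (q : ℂ) ^ 2) * ∑' m : ℤ,
        (q : ℂ) ^ (2 * m) *
          ((qE q (Complex.I * (1 - (q : ℂ) ^ 2) * (q : ℂ) ^ 2 * (q : ℂ) ^ (2 * m)) *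
              qe q (-(Complex.I * (1 - (q : ℂ) ^ 2)) * (q : ℂ) ^ (2 * m))) +
            (qE q (Complex.I * (1 - (q : ℂ) ^ 2) * (q : ℂ) ^ 2 * (-((q : ℂ) ^ (2 * m)))) *
              qe q (-(Complex.I * (1 - (q : ℂ) ^ 2)) * (-((q : ℂ) ^ (2 * m)))))) =
      (2 / (1 - (q : ℂ) ^ 2)) *
        ((1 - q ^ 2) * ∑' m : ℤ,
          (1 : ℝ) / ((1 - q ^ 2) * q ^ (2 * m) + (1 - q ^ 2)⁻¹ * q ^ (-(2 * m))) : ℝ) := by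
  have ha : (0:ℝ) < 1 - q ^ 2 := by nlinarith
  have haC : (1 : ℂ) - (q:ℂ) ^ 2 ≠ 0 := by
    have : ((1 - q ^ 2 : ℝ) : ℂ) ≠ 0 := by exact_mod_cast ha.ne'
    push_cast at this
    exact this
  set g : ℤ → ℝ := fun m => (1:ℝ) / ((1 - q ^ 2) * q ^ (2 * m) + (1 - q ^ 2)⁻¹ * q ^ (-(2 * m)))
    with hg
  have hterm : ∀ m : ℤ,
      (1 - (q : ℂ) ^ 2) * ((q : ℂ) ^ (2 * m) *
          ((qE q (Complex.I * (1 - (q : ℂ) ^ 2) * (q : ℂ) ^ 2 * (q : ℂ) ^ (2 * m)) *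
              qe q (-(Complex.I * (1 - (q : ℂ) ^ 2)) * (q : ℂ) ^ (2 * m))) +
            (qE q (Complex.I * (1 - (q : ℂ) ^ 2) * (q : ℂ) ^ 2 * (-((q : ℂ) ^ (2 * m)))) *
              qe q (-(Complex.I * (1 - (q : ℂ) ^ 2)) * (-((q : ℂ) ^ (2 * m))))))) =
        2 * ((g m : ℝ) : ℂ) := by
    intro m
    have hqm : (0:ℝ) < q ^ (2 * m) := zpow_pos hq0 _
    set r : ℝ := (1 - q ^ 2) * q ^ (2 * m) with hrdef
    have hrpos : 0 < r := mul_pos ha hqm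
    have hr : r ≠ 0 := hrpos.ne'
    have e1 : Complex.I * (1 - (q : ℂ) ^ 2) * (q : ℂ) ^ 2 * (q : ℂ) ^ (2 * m)
        = I * (r : ℂ) * (q : ℂ) ^ 2 := by rw [hrdef]; push_cast; ring
    have e2 : -(Complex.I * (1 - (q : ℂ) ^ 2)) * (q : ℂ) ^ (2 * m) = -(I * (r : ℂ)) := by
      rw [hrdef]; push_cast; ring
    have e3 : Complex.I * (1 - (q : ℂ) ^ 2) * (q : ℂ) ^ 2 * (-((q : ℂ) ^ (2 * m)))
        = I * ((-r : ℝ) : ℂ) * (q : ℂ) ^ 2 := by rw [hrdef]; push_cast; ring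
    have e4 : -(Complex.I * (1 - (q : ℂ) ^ 2)) * (-((q : ℂ) ^ (2 * m))) = -(I * ((-r : ℝ) : ℂ)) := by
      rw [hrdef]; push_cast; ring
    rw [e1, e2, e3, e4, key_telescope q r hq0 hq1 hr,
      key_telescope q (-r) hq0 hq1 (neg_ne_zero.2 hr), pair_inv r hr]
    have hreal : (1 - q ^ 2) * (q ^ (2 * m) * (2 / (1 + r ^ 2))) = 2 * g m := by
      simp only [hg, hrdef]
      have ht : q ^ (2 * m) ≠ 0 := hqm.ne'
      have hD : (1 - q ^ 2) * q ^ (2 * m) + (1 - q ^ 2)⁻¹ * q ^ (-(2 * m)) ≠ 0 := by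
        have : (0:ℝ) < (1 - q ^ 2) * q ^ (2 * m) + (1 - q ^ 2)⁻¹ * q ^ (-(2 * m)) := by
          have h2 : (0:ℝ) < q ^ (-(2 * m)) := zpow_pos hq0 _
          positivity
        exact this.ne'
      rw [zpow_neg] at hD ⊢
      have h1r : (1:ℝ) + ((1 - q ^ 2) * q ^ (2 * m)) ^ 2 ≠ 0 := by positivity
      field_simp
      ring
    calc (1 - (q : ℂ) ^ 2) * ((q : ℂ) ^ (2 * m) * (((2 / (1 + r ^ 2) : ℝ)) : ℂ))
        = (((1 - q ^ 2) * (q ^ (2 * m) * (2 / (1 + r ^ 2))) : ℝ) : ℂ) := by push_cast; ring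
      _ = ((2 * g m : ℝ) : ℂ) := by rw [hreal]
      _ = 2 * ((g m : ℝ) : ℂ) := by push_cast; ring
  calc (1 - (q : ℂ) ^ 2) * ∑' m : ℤ,
        (q : ℂ) ^ (2 * m) *
          ((qE q (Complex.I * (1 - (q : ℂ) ^ 2) * (q : ℂ) ^ 2 * (q : ℂ) ^ (2 * m)) *
              qe q (-(Complex.I * (1 - (q : ℂ) ^ 2)) * (q : ℂ) ^ (2 * m))) +
            (qE q (Complex.I * (1 - (q : ℂ) ^ 2) * (q : ℂ) ^ 2 * (-((q : ℂ) ^ (2 * m)))) *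
              qe q (-(Complex.I * (1 - (q : ℂ) ^ 2)) * (-((q : ℂ) ^ (2 * m))))))
      = ∑' m : ℤ, 2 * ((g m : ℝ) : ℂ) := by
        rw [← tsum_mul_left]
        exact tsum_congr hterm
    _ = 2 * ∑' m : ℤ, ((g m : ℝ) : ℂ) := tsum_mul_left
    _ = (2 / (1 - (q : ℂ) ^ 2)) * ((1 - q ^ 2) * ∑' m : ℤ, g m : ℝ) := by
        rw [Complex.ofReal_mul, Complex.ofReal_tsum]
        push_cast
        field_simp
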